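/- For every natural number n ≥ 1, the number of permutations of length n avoiding both patterns 123 and 231 equals (n² − n + 2)/2. -/

import Mathlib

/-- A permutation `π` of length `n` contains the pattern `p` (a length-`k`
sequence of distinct values, given by its values) if there is a strictly
increasing choice of `k` indices on which `π` is order isomorphic to `p`. -/
def PermContains {n k : ℕ} (π : Equiv.Perm (Fin n)) (p : Fin k → ℕ) : Prop :=
  ∃ f : Fin k → Fin n, StrictMono f ∧ ∀ a b : Fin k, p a < p b ↔ π (f a) < π (f b)

/-- `π` avoids the pattern `p`. -/
def PermAvoids {n k : ℕ} (π : Equiv.Perm (Fin n)) (p : Fin k → ℕ) : Prop :=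
  ¬ PermContains π p

namespace Av

def gfun (n s t p : ℕ) : ℕ :=
  if p < n - t then n - 1 - p
  else if p < n - t + s then n - t + s - 1 - p
  else n + s - 1 - p

def Valid (n s t : ℕ) : Prop := (s = 0 ∧ t = 0) ∨ (1 ≤ s ∧ s < t ∧ t ≤ n)

lemma gfun_lt {n s t : ℕ} (h : Valid n s t) {p : ℕ} (hp : p < n) : gfun n s t p < n := by
  rcases h with ⟨h1, h2⟩ | ⟨h1, h2, h3⟩ <;> unfold gfun <;> split_ifs <;> omega

lemma gfun_inj {n s t : ℕ} (h : Valid n s t) {p q : ℕ} (hp : p < n) (hq : q < n)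
    (he : gfun n s t p = gfun n s t q) : p = q := by
  rcases h with ⟨h1, h2⟩ | ⟨h1, h2, h3⟩ <;> unfold gfun at he <;> split_ifs at he <;> omega

noncomputable def Gp (n s t : ℕ) (h : Valid n s t) : Equiv.Perm (Fin n) :=
  Equiv.ofBijective (fun p => ⟨gfun n s t p.val, gfun_lt h p.isLt⟩)
    (Finite.injective_iff_bijective.mp fun p q hpq =>
      Fin.ext (gfun_inj h p.isLt q.isLt (congrArg Fin.val hpq)))

lemma Gp_apply {n s t : ℕ} (h : Valid n s t) (x : Fin n) :
    ((Gp n s t h x : Fin n) : ℕ) = gfun n s t x.val := rfl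

def Cond {n : ℕ} (π : Equiv.Perm (Fin n)) : Prop :=
  ∀ a b c : Fin n, a < b → b < c → π a < π b → π a < π c ∧ π c < π b

lemma Gp_cond {n s t : ℕ} (h : Valid n s t) : Cond (Gp n s t h) := by
  intro a b c hab hbc h1
  have ha := a.isLt; have hb := b.isLt; have hc := c.isLt
  simp only [Fin.lt_def, Gp_apply] at hab hbc h1 ⊢
  rcases h with ⟨h1', h2'⟩ | ⟨h1', h2', h3'⟩ <;> unfold gfun at h1 ⊢ <;>
    split_ifs at h1 ⊢ <;> omega


lemma avoids_iff {n : ℕ} (π : Equiv.Perm (Fin n)) :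
    (PermAvoids π ![1,2,3] ∧ PermAvoids π ![2,3,1]) ↔ Cond π := by
  constructor
  · rintro ⟨h123, h231⟩ a b c hab hbc h1
    have hac : a < c := lt_trans hab hbc
    have smono : ∀ x y z : Fin n, x < y → y < z → StrictMono ![x, y, z] := by
      intro x y z hxy hyz i j hij
      fin_cases i <;> fin_cases j <;>
        simp only [Matrix.cons_val_zero, Matrix.cons_val_one, Matrix.head_cons,
          Matrix.cons_val_two, Matrix.tail_cons, Fin.mk_zero, Fin.mk_one] <;>
        first
          | exact absurd hij (by decide)
          | exact hxy
          | exact hyz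
          | exact lt_trans hxy hyz
    constructor
    · by_contra hcon
      have hca : π c < π a := by
        rcases lt_or_eq_of_le (not_lt.mp hcon) with h | h
        · exact h
        · exact absurd (π.injective h) (ne_of_gt hac)
      refine h231 ⟨![a, b, c], smono a b c hab hbc, ?_⟩
      have e1 : (π a).val < (π b).val := h1
      have e2 : (π c).val < (π a).val := hca
      have h2' : (⟨2, by norm_num⟩ : Fin 3) = 2 := rfl
      intro i j
      fin_cases i <;> fin_cases j <;>
        simp only [h2', Matrix.cons_val_zero, Matrix.cons_val_one, Matrix.head_cons,
          Matrix.cons_val_two, Matrix.tail_cons, Fin.mk_zero, Fin.mk_one, Fin.lt_def] <;>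
        omega
    · by_contra hcon
      have hcb : π b < π c := by
        rcases lt_or_eq_of_le (not_lt.mp hcon) with h | h
        · exact h
        · exact absurd (π.injective h.symm) (ne_of_gt hbc)
      refine h123 ⟨![a, b, c], smono a b c hab hbc, ?_⟩
      have e1 : (π a).val < (π b).val := h1
      have e2 : (π b).val < (π c).val := hcb
      have h2' : (⟨2, by norm_num⟩ : Fin 3) = 2 := rfl
      intro i j
      fin_cases i <;> fin_cases j <;>
        simp only [h2', Matrix.cons_val_zero, Matrix.cons_val_one, Matrix.head_cons,
          Matrix.cons_val_two, Matrix.tail_cons, Fin.mk_zero, Fin.mk_one, Fin.lt_def] <;>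
        omega
  · intro hC
    constructor <;> rintro ⟨f, hf, hiso⟩
    · have h01 : π (f 0) < π (f 1) := (hiso 0 1).mp (by norm_num)
      have h12 : π (f 1) < π (f 2) := (hiso 1 2).mp (by decide)
      have := (hC (f 0) (f 1) (f 2) (hf (by decide)) (hf (by decide)) h01).2
      exact lt_asymm h12 this
    · have h01 : π (f 0) < π (f 1) := (hiso 0 1).mp (by norm_num)
      have h20 : π (f 2) < π (f 0) := (hiso 2 0).mp (by decide)
      have := (hC (f 0) (f 1) (f 2) (hf (by decide)) (hf (by decide)) h01).1
      exact lt_asymm h20 this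


lemma strictMono_le {n : ℕ} {f : Fin n → Fin n} (hf : StrictMono f) :
    ∀ k (x : Fin n), x.val = k → k ≤ (f x).val := by
  intro k
  induction k with
  | zero => intro x _; exact Nat.zero_le _
  | succ m ih =>
    intro x hx
    have hm : m < n := by omega
    have h1 := ih ⟨m, hm⟩ rfl
    have h2 : f ⟨m, hm⟩ < f x := hf (by simp [Fin.lt_def]; omega)
    have h3 : (f ⟨m, hm⟩).val < (f x).val := h2
    omega

lemma perm_eq_of_iff {n : ℕ} (π ρ : Equiv.Perm (Fin n))
    (h : ∀ x y, π x < π y ↔ ρ x < ρ y) : π = ρ := by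
  set g : Equiv.Perm (Fin n) := π.symm.trans ρ with hg
  have hgm : StrictMono (g : Fin n → Fin n) := by
    intro u v huv
    have h1 : π (π.symm u) < π (π.symm v) := by simpa using huv
    exact (h _ _).mp h1
  have hginv : StrictMono (g.symm : Fin n → Fin n) := by
    intro u v huv
    rcases lt_trichotomy (g.symm u) (g.symm v) with h' | h' | h'
    · exact h'
    · exact absurd (congrArg g h') (by simpa using ne_of_lt huv)
    · have := hgm h'
      simp only [Equiv.apply_symm_apply] at this
      exact absurd huv (not_lt.mpr (le_of_lt this))
  have hid : ∀ x, g x = x := by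
    intro x
    have h1 : x.val ≤ (g x).val := strictMono_le hgm x.val x rfl
    have h2 : (g x).val ≤ (g.symm (g x)).val := strictMono_le hginv (g x).val (g x) rfl
    simp only [Equiv.symm_apply_apply] at h2
    exact Fin.ext (le_antisymm h2 h1)
  apply Equiv.ext
  intro x
  have := hid (π x)
  simp only [hg, Equiv.trans_apply, Equiv.symm_apply_apply] at this
  exact (this).symm

lemma chain_desc {n : ℕ} (f : Fin n → Fin n) (p : ℕ)
    (h : ∀ i, i + 1 ≤ p → ∀ (hi : i + 1 < n), f ⟨i + 1, hi⟩ < f ⟨i, by omega⟩) :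
    ∀ x y : Fin n, x < y → y.val ≤ p → f y < f x := by
  have key : ∀ d (x : ℕ) (hx : x + d < n), x + d ≤ p → d ≠ 0 →
      f ⟨x + d, hx⟩ < f ⟨x, by omega⟩ := by
    intro d
    induction d with
    | zero => intro x hx _ hd; exact absurd rfl hd
    | succ m ih =>
      intro x hx hp _
      rcases Nat.eq_zero_or_pos m with hm | hm
      · subst hm; exact h x (by omega) hx
      · exact lt_trans (h (x + m) (by omega) hx) (ih x (by omega) (by omega) (by omega))
  intro x y hxy hyp
  have hxy' : x.val < y.val := hxy
  have hr := key (y.val - x.val) x.val (by omega) (by omega) (by omega)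
  have e1 : (⟨x.val + (y.val - x.val), by omega⟩ : Fin n) = y := Fin.ext (by simp; omega)
  have e2 : (⟨x.val, by omega⟩ : Fin n) = x := Fin.ext rfl
  rwa [e1, e2] at hr


lemma nat_exists_min {P : ℕ → Prop} (h : ∃ a, P a) : ∃ a, P a ∧ ∀ b, b < a → ¬ P b := by
  obtain ⟨a, ha⟩ := h
  induction a using Nat.strong_induction_on with
  | _ a ih =>
    by_cases h' : ∃ b, b < a ∧ P b
    · obtain ⟨b, hb1, hb2⟩ := h'
      exact ih b hb1 hb2
    · push_neg at h'
      exact ⟨a, ha, fun b hb => h' b hb⟩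

set_option maxHeartbeats 1000000 in
lemma cond_imp {n : ℕ} (hn : 1 ≤ n) (π : Equiv.Perm (Fin n)) (hC : Cond π) :
    ∃ s t, ∃ h : Valid n s t, π = Gp n s t h := by
  by_cases hdesc : ∀ i : ℕ, ∀ hi : i + 1 < n, π ⟨i + 1, hi⟩ < π ⟨i, by omega⟩
  · refine ⟨0, 0, Or.inl ⟨rfl, rfl⟩, ?_⟩
    apply perm_eq_of_iff
    intro x y
    have hx := x.isLt; have hy := y.isLt
    have hGap : ∀ z : Fin n, ((Gp n 0 0 (Or.inl ⟨rfl, rfl⟩) z : Fin n) : ℕ) = n - 1 - z.val := by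
      intro z
      show gfun n 0 0 z.val = n - 1 - z.val; unfold gfun; split_ifs <;> omega
    have hchain := chain_desc (fun z => π z) n (fun i _ hi => hdesc i hi)
    constructor
    · intro hxy
      rcases lt_trichotomy x y with h' | h' | h'
      · exact absurd (hchain x y h' (by omega)) (lt_asymm hxy)
      · subst h'; exact absurd hxy (lt_irrefl _)
      · have h'' : y.val < x.val := h'
        simp only [Fin.lt_def, hGap]; omega
    · intro hxy
      have h1 : n - 1 - x.val < n - 1 - y.val := by
        have := hGap x; have := hGap y
        simp only [Fin.lt_def, hGap] at hxy; omega
      have hyx : y < x := by simp only [Fin.lt_def]; omega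
      exact hchain y x hyx (by omega)
  · push_neg at hdesc
    classical
    have hQ : ∃ i : ℕ, ∃ hi : i + 1 < n, π ⟨i, Nat.lt_of_succ_lt hi⟩ < π ⟨i + 1, hi⟩ := by
      obtain ⟨i, hi, hlt⟩ := hdesc
      refine ⟨i, hi, ?_⟩
      rcases lt_trichotomy (π ⟨i, Nat.lt_of_succ_lt hi⟩) (π ⟨i + 1, hi⟩) with h | h | h
      · exact h
      · exact absurd (π.injective h) (by simp [Fin.ext_iff])
      · exact absurd h (not_lt.mpr hlt)
    obtain ⟨p, ⟨hp1, hasc⟩, hmin⟩ := nat_exists_min hQ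
    have hpn : p < n := by omega
    set P0 : Fin n := ⟨p, hpn⟩ with hP0
    set P1 : Fin n := ⟨p + 1, hp1⟩ with hP1
    set N1 : Fin n := ⟨n - 1, by omega⟩ with hN1
    -- p+1 block facts
    have sandw : ∀ c : Fin n, p + 2 ≤ c.val → π P0 < π c ∧ π c < π P1 := by
      intro c hc
      exact hC P0 P1 c (by simp [Fin.lt_def, hP0, hP1]) (by simp [Fin.lt_def, hP1]; omega) hasc
    have lowP0 : ∀ c : Fin n, p + 1 ≤ c.val → π P0 < π c := by
      intro c hc
      rcases eq_or_lt_of_le hc with h | h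
      · have : c = P1 := Fin.ext h.symm
        rw [this]; exact hasc
      · exact (sandw c (by omega)).1
    have maxC : ∀ c : Fin n, p + 1 ≤ c.val → π c ≤ π P1 := by
      intro c hc
      rcases eq_or_lt_of_le hc with h | h
      · have : c = P1 := Fin.ext h.symm
        rw [this]
      · exact le_of_lt (sandw c (by omega)).2
    have decC : ∀ c c' : Fin n, p + 1 ≤ c.val → c < c' → π c' < π c := by
      intro c c' h1 h2
      exact (hC P0 c c' (by simp [Fin.lt_def, hP0]; omega) h2 (lowP0 c h1)).2
    have minC : ∀ c : Fin n, p + 1 ≤ c.val → π N1 ≤ π c := by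
      intro c hc
      rcases eq_or_lt_of_le (show c.val ≤ n - 1 by omega) with h | h
      · have : c = N1 := Fin.ext (by simp [hN1]; omega)
        rw [this]
      · exact le_of_lt (decC c N1 hc (by simp [Fin.lt_def, hN1]; omega))
    have dec1 : ∀ x y : Fin n, x < y → y.val ≤ p → π y < π x := by
      apply chain_desc
      intro i hip hi
      have hnq := hmin i (by omega)
      have h2 : ¬ π ⟨i, by omega⟩ < π ⟨i + 1, hi⟩ := fun hcon => hnq ⟨hi, hcon⟩
      rcases lt_trichotomy (π ⟨i + 1, hi⟩) (π ⟨i, by omega⟩) with h | h | h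
      · exact h
      · exact absurd (π.injective h) (by simp [Fin.ext_iff])
      · exact absurd h h2
    have hP0small : π P0 < π N1 := by
      rcases eq_or_lt_of_le (show p + 1 ≤ n - 1 by omega) with h | h
      · have : P1 = N1 := Fin.ext (by simp [hP1, hN1]; omega)
        rw [← this]; exact hasc
      · exact (sandw N1 (by simp [hN1]; omega)).1
    have dich : ∀ a : Fin n, a.val < p → π a < π N1 ∨ π P1 < π a := by
      intro a ha
      rcases lt_trichotomy (π a) (π P1) with h | h | h
      · rcases eq_or_lt_of_le (show p + 1 ≤ n - 1 by omega) with h' | h'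
        · left; have : P1 = N1 := Fin.ext (by simp [hP1, hN1]; omega)
          rw [← this]; exact h
        · left
          exact (hC a P1 N1 (by simp [Fin.lt_def, hP1]; omega)
            (by simp [Fin.lt_def, hP1, hN1]; omega) h).1
      · exact absurd (π.injective h) (by simp [Fin.ext_iff, hP1]; omega)
      · right; exact h
    -- the split point q
    have hQ2 : ∃ a : ℕ, ∃ ha : a < n, a ≤ p ∧ π ⟨a, ha⟩ < π N1 :=
      ⟨p, hpn, le_refl _, hP0small⟩
    obtain ⟨q, ⟨hqn, hqp, hqsmall⟩, hq2min⟩ := nat_exists_min hQ2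
    have bigA : ∀ a : Fin n, a.val < q → π P1 < π a := by
      intro a ha
      have hnq := hq2min a.val ha
      have ha' : (⟨a.val, a.isLt⟩ : Fin n) = a := Fin.ext rfl
      have h3 : ¬ π a < π N1 := by
        intro hcon
        exact hnq ⟨a.isLt, by omega, by rwa [ha']⟩
      rcases dich a (by omega) with h | h
      · exact absurd h h3
      · exact h
    have smallB : ∀ b : Fin n, q ≤ b.val → b.val ≤ p → π b < π N1 := by
      intro b h1 h2
      rcases eq_or_lt_of_le h1 with h | h
      · have : b = ⟨q, hqn⟩ := Fin.ext h.symm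
        rw [this]; exact hqsmall
      · exact lt_trans (dec1 ⟨q, hqn⟩ b (by simp [Fin.lt_def]; omega) h2) hqsmall
    have hBC : ∀ x y : Fin n, q ≤ x.val → x.val ≤ p → p + 1 ≤ y.val → π x < π y :=
      fun x y h1 h2 h3 => lt_of_lt_of_le (smallB x h1 h2) (minC y h3)
    have hCA : ∀ x y : Fin n, p + 1 ≤ x.val → y.val < q → π x < π y :=
      fun x y h1 h2 => lt_of_le_of_lt (maxC x h1) (bigA y h2)
    have hBA : ∀ x y : Fin n, q ≤ x.val → x.val ≤ p → y.val < q → π x < π y :=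
      fun x y h1 h2 h3 =>
        lt_trans (lt_of_lt_of_le (smallB x h1 h2) (maxC N1 (by simp [hN1]; omega))) (bigA y h3)
    -- region-based total comparison
    have hπR : ∀ x y : Fin n,
        ((q ≤ x.val ∧ x.val < p + 1 ∧ ((q ≤ y.val ∧ y.val < p + 1 ∧ y.val < x.val) ∨ p + 1 ≤ y.val ∨ y.val < q)) ∨
         (p + 1 ≤ x.val ∧ ((p + 1 ≤ y.val ∧ y.val < x.val) ∨ y.val < q)) ∨
         (x.val < q ∧ y.val < q ∧ y.val < x.val)) → π x < π y := by
      rintro x y (⟨h1, h2, (⟨h3, h4, h5⟩ | h3 | h3)⟩ | ⟨h1, (⟨h2, h3⟩ | h2)⟩ | ⟨h1, h2, h3⟩)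
      · exact dec1 y x (Fin.lt_def.mpr (by omega)) (by omega)
      · exact hBC x y h1 (by omega) h3
      · exact hBA x y h1 (by omega) h3
      · exact decC y x h2 (Fin.lt_def.mpr (by omega))
      · exact hCA x y h1 h2
      · exact dec1 y x (Fin.lt_def.mpr (by omega)) (by omega)
    have hqple : q ≤ p := hqp
    have hv : Valid n (p + 1 - q) (n - q) := Or.inr ⟨by omega, by omega, by omega⟩
    refine ⟨p + 1 - q, n - q, hv, ?_⟩
    apply perm_eq_of_iff
    intro x y
    have hx := x.isLt; have hy := y.isLt
    have hfull : π x < π y ↔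
        ((q ≤ x.val ∧ x.val < p + 1 ∧ ((q ≤ y.val ∧ y.val < p + 1 ∧ y.val < x.val) ∨ p + 1 ≤ y.val ∨ y.val < q)) ∨
         (p + 1 ≤ x.val ∧ ((p + 1 ≤ y.val ∧ y.val < x.val) ∨ y.val < q)) ∨
         (x.val < q ∧ y.val < q ∧ y.val < x.val)) := by
      constructor
      · intro hlt
        by_contra hcon
        have hne : x.val ≠ y.val := by
          intro h
          have hxy : x = y := Fin.ext h
          rw [hxy] at hlt
          exact lt_irrefl _ hlt
        have hR : ((q ≤ y.val ∧ y.val < p + 1 ∧ ((q ≤ x.val ∧ x.val < p + 1 ∧ x.val < y.val) ∨ p + 1 ≤ x.val ∨ x.val < q)) ∨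
         (p + 1 ≤ y.val ∧ ((p + 1 ≤ x.val ∧ x.val < y.val) ∨ x.val < q)) ∨
         (y.val < q ∧ x.val < q ∧ x.val < y.val)) := by omega
        exact absurd hlt (lt_asymm (hπR y x hR))
      · exact hπR x y
    have hG : ((q ≤ x.val ∧ x.val < p + 1 ∧ ((q ≤ y.val ∧ y.val < p + 1 ∧ y.val < x.val) ∨ p + 1 ≤ y.val ∨ y.val < q)) ∨
         (p + 1 ≤ x.val ∧ ((p + 1 ≤ y.val ∧ y.val < x.val) ∨ y.val < q)) ∨
         (x.val < q ∧ y.val < q ∧ y.val < x.val)) ↔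
        Gp n (p + 1 - q) (n - q) hv x < Gp n (p + 1 - q) (n - q) hv y := by
      rw [Fin.lt_def, Gp_apply, Gp_apply]
      unfold gfun
      split_ifs <;> omega
    exact hfull.trans hG


noncomputable def Phi (n : ℕ) : Option {p : Fin n × Fin n // p.1 < p.2} →
    {π : Equiv.Perm (Fin n) // PermAvoids π ![1, 2, 3] ∧ PermAvoids π ![2, 3, 1]}
  | none => ⟨Gp n 0 0 (Or.inl ⟨rfl, rfl⟩), (avoids_iff _).mpr (Gp_cond _)⟩
  | some ⟨(a, b), hab⟩ =>
    ⟨Gp n (a.val + 1) (b.val + 1)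
        (Or.inr ⟨by omega, by have : a.val < b.val := hab; omega, by have := b.isLt; omega⟩),
      (avoids_iff _).mpr (Gp_cond _)⟩

end Av

theorem av123_231_card (n : ℕ) (hn : 1 ≤ n) :
    Nat.card {π : Equiv.Perm (Fin n) //
        PermAvoids π ![1, 2, 3] ∧ PermAvoids π ![2, 3, 1]} =
      (n ^ 2 - n + 2) / 2 := by
  classical
  have hinj : Function.Injective (Av.Phi n) := by
    intro u v huv
    have hval : ∀ x (hx : x < n),
        (((Av.Phi n u).1 : Equiv.Perm (Fin n)) ⟨x, hx⟩).val =
        (((Av.Phi n v).1 : Equiv.Perm (Fin n)) ⟨x, hx⟩).val := by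
      intro x hx; rw [huv]
    match u, v with
    | none, none => rfl
    | none, some ⟨(a, b), hab⟩ =>
      exfalso
      have hab' : a.val < b.val := hab
      have hbn := b.isLt
      have h1 := hval (n - 1) (by omega)
      simp only [Av.Phi, Av.Gp_apply] at h1
      change Av.gfun n 0 0 (n - 1) = Av.gfun n (a.val + 1) (b.val + 1) (n - 1) at h1
      unfold Av.gfun at h1
      split_ifs at h1 <;> omega
    | some ⟨(a, b), hab⟩, none =>
      exfalso
      have hab' : a.val < b.val := hab
      have hbn := b.isLt
      have h1 := hval (n - 1) (by omega)
      simp only [Av.Phi, Av.Gp_apply] at h1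
      change Av.gfun n (a.val + 1) (b.val + 1) (n - 1) = Av.gfun n 0 0 (n - 1) at h1
      unfold Av.gfun at h1
      split_ifs at h1 <;> omega
    | some ⟨(a, b), hab⟩, some ⟨(a', b'), hab'⟩ =>
      have h1' : a.val < b.val := hab
      have h2' : a'.val < b'.val := hab'
      have hbn := b.isLt
      have hbn' := b'.isLt
      have h1 := hval (n - 1) (by omega)
      have h2 := hval (n - (b.val + 1) + (a.val + 1) - 1) (by omega)
      simp only [Av.Phi, Av.Gp_apply] at h1 h2
      change Av.gfun n (a.val + 1) (b.val + 1) (n - 1) = Av.gfun n (a'.val + 1) (b'.val + 1) (n - 1) at h1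
      change Av.gfun n (a.val + 1) (b.val + 1) (n - (b.val + 1) + (a.val + 1) - 1) = Av.gfun n (a'.val + 1) (b'.val + 1) (n - (b.val + 1) + (a.val + 1) - 1) at h2
      unfold Av.gfun at h1 h2
      have heqa : a.val = a'.val := by split_ifs at h1 <;> omega
      have heqb : b.val = b'.val := by split_ifs at h2 <;> omega
      simp only [Option.some.injEq, Subtype.mk.injEq, Prod.mk.injEq]
      exact ⟨Fin.ext heqa, Fin.ext heqb⟩
  have hsurj : Function.Surjective (Av.Phi n) := by
    rintro ⟨π, hav⟩
    have hC := (Av.avoids_iff π).mp hav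
    obtain ⟨s, t, hvalid, heq⟩ := Av.cond_imp hn π hC
    rcases id hvalid with ⟨hs, ht⟩ | ⟨h1, h2, h3⟩
    · subst hs; subst ht
      exact ⟨none, Subtype.ext heq.symm⟩
    · obtain ⟨a, rfl⟩ : ∃ a, s = a + 1 := ⟨s - 1, by omega⟩
      obtain ⟨b, rfl⟩ : ∃ b, t = b + 1 := ⟨t - 1, by omega⟩
      refine ⟨some ⟨(⟨a, by omega⟩, ⟨b, by omega⟩), ?_⟩, ?_⟩
      · show (⟨a, by omega⟩ : Fin n) < (⟨b, by omega⟩ : Fin n)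
        exact Fin.mk_lt_mk.mpr (by omega)
      · exact Subtype.ext heq.symm
  have hbij : Function.Bijective (Av.Phi n) := ⟨hinj, hsurj⟩
  have hcard1 := (Nat.card_eq_of_bijective _ hbij).symm
  rw [hcard1, Finite.card_option]
  have e : {p : Fin n × Fin n // p.1 < p.2} ≃ (Σ b : Fin n, Fin b.val) :=
    { toFun := fun p => ⟨p.1.2, ⟨p.1.1.val, p.2⟩⟩
      invFun := fun x => ⟨(⟨x.2.val, lt_trans x.2.isLt x.1.isLt⟩, x.1), x.2.isLt⟩
      left_inv := fun p => rfl
      right_inv := fun x => rfl }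
  rw [Nat.card_congr e, Nat.card_eq_fintype_card, Fintype.card_sigma]
  simp only [Fintype.card_fin]
  rw [show (∑ x : Fin n, (x : ℕ)) = ∑ i ∈ Finset.range n, i from
    Fin.sum_univ_eq_sum_range (fun i => i) n, Finset.sum_range_id]
  have h4 : n * n = n * (n - 1) + n := by
    rcases n with _ | m
    · simp
    · exact Nat.mul_succ (m + 1) m
  have hk : ∃ k, n * (n - 1) = k + k := by
    obtain ⟨k, hk⟩ := Nat.even_mul_succ_self (n - 1)
    exact ⟨k, by rw [Nat.mul_comm]; rw [show n - 1 + 1 = n by omega] at hk; exact hk⟩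
  obtain ⟨k, hk⟩ := hk
  rw [pow_two]
  omega
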